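/- Let (X,d) be a metric space, let p_1, …, p_k ∈ X (k ≥ 1), and let D = X∖{p_1, …, p_k}. Then the average scale-invariant Cassinian metric τ̂_D satisfies the Gromov four-point condition with constant δ = 3·log 3 + log 2; that is, for all x, y, z, w ∈ D, τ̂_D(x,y) + τ̂_D(z,w) ≤ max(τ̂_D(x,z) + τ̂_D(y,w), τ̂_D(x,w) + τ̂_D(y,z)) + 2·(3·log 3 + log 2). In particular, the constant does not depend on k. -/

import Mathlib

set_option maxHeartbeats 1600000

noncomputable def tauOne {X : Type*} [MetricSpace X] (p x y : X) : ℝ :=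
  Real.log (1 + 2 * dist x y / Real.sqrt (dist x p * dist y p))

noncomputable def tauHatAvg {X : Type*} [MetricSpace X] {k : ℕ}
    (p : Fin k → X) (x y : X) : ℝ :=
  (1 / k : ℝ) * ∑ i : Fin k, tauOne (p i) x y

private lemma cass_half_bound (A C u : ℝ) (hA : 0 ≤ A) (hC : 0 ≤ C) (hu : 0 ≤ u)
    (h : A^2 ≤ C^2 + u) : A^2 ≤ A*C + 2*u := by
  rcases le_total A C with h' | h'
  · nlinarith [mul_nonneg hA hA]
  · nlinarith [mul_nonneg (sub_nonneg.2 h') (by positivity : (0:ℝ) ≤ A + 2*C)]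

private lemma cass_suv_bound (s u v m n : ℝ) (hu : 0 ≤ u) (hv : 0 ≤ v)
    (hn : 0 ≤ n)
    (h1 : s ≤ u + n) (h2 : s ≤ m + v) (hH : m * n ≤ u * v) : s ≤ u + v := by
  rcases le_total s u with h | h
  · linarith
  rcases le_total s v with h' | h'
  · linarith
  have h3 : (s - u) * (s - v) ≤ n * m :=
    mul_le_mul (by linarith) (by linarith) (by linarith) (by linarith)
  nlinarith

private lemma cass_mix_core (A B t u v m n P Q : ℝ)
    (hA : 0 ≤ A) (hB : 0 ≤ B) (ht : 0 ≤ t) (hu : 0 ≤ u) (hv : 0 ≤ v)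
    (hm : 0 ≤ m) (hn : 0 ≤ n) (hP0 : 0 ≤ P) (hQ0 : 0 ≤ Q)
    (hAP : A^2 ≤ P) (hBQ : B^2 ≤ Q) (huP : 2*u ≤ P) (hvQ : 2*v ≤ Q)
    (htum : t ≤ u + m) (htvn : t ≤ v + n)
    (hnB1 : B^2 ≤ P + n) (hnB2 : n ≤ B^2 + P)
    (hH : m * n ≤ u * v) (hPQ : P ≤ Q) :
    2*t*(A*B) ≤ 6*(P*Q) := by
  have htuv : t ≤ u + v := by
    refine cass_suv_bound t u v n m hu hv hm htum ?_ ?_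
    · linarith
    · nlinarith [hH]
  have htQ : t ≤ Q := by linarith
  have huv : u * v ≤ (P/2)*(Q/2) := by nlinarith
  rcases le_total (B^2) (8*P) with hb | hb
  · have h1 : (A*B)^2 ≤ 8*P^2 := by nlinarith [sq_nonneg A, sq_nonneg B]
    have h2 : A*B ≤ 3*P := by nlinarith [mul_nonneg hA hB]
    have h3 : t*(A*B) ≤ Q*(3*P) := mul_le_mul htQ h2 (mul_nonneg hA hB) hQ0
    nlinarith
  · have hn1 : (7/8)*B^2 ≤ n := by linarith
    have hn2 : n ≤ (9/8)*B^2 := by linarith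
    have htn : t*n ≤ (P/2)*n + u*v := by nlinarith [mul_le_mul_of_nonneg_right htum hn]
    have htb : t*(B^2) ≤ (9/14)*(P*B^2) + (2/7)*(P*Q) := by
      have h4 : t*((7/8)*B^2) ≤ t*n := mul_le_mul_of_nonneg_left hn1 ht
      nlinarith [mul_nonneg hP0 (sq_nonneg B)]
    have key : (2*t*(A*B))^2 ≤ 36*(P*Q)^2 := by
      have e2 : (t*B^2)*t ≤ ((9/14)*(P*B^2) + (2/7)*(P*Q))*Q := by
        apply mul_le_mul htb htQ ht
        positivity
      have e3 : 4*(A^2)*((t*B^2)*t) ≤ 4*P*(((9/14)*(P*B^2) + (2/7)*(P*Q))*Q) := by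
        have hr : 0 ≤ ((9/14)*(P*B^2) + (2/7)*(P*Q))*Q := by positivity
        nlinarith [mul_nonneg (sq_nonneg A) (sub_nonneg.2 e2),
          mul_nonneg (sub_nonneg.2 hAP) hr]
      have e4 : 4*P*(((9/14)*(P*B^2) + (2/7)*(P*Q))*Q) ≤ 4*P*(((9/14)*(P*Q) + (2/7)*(P*Q))*Q) := by
        nlinarith [mul_nonneg (mul_nonneg hP0 hP0) (mul_nonneg hQ0 (sub_nonneg.2 hBQ))]
      nlinarith [mul_nonneg hP0 hQ0, sq_nonneg (P*Q)]
    have h2t : 0 ≤ 2*t*(A*B) := by positivity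
    nlinarith [mul_nonneg hP0 hQ0]

private lemma cass_st_core (s t u v m n P Q : ℝ)
    (hs : 0 ≤ s) (ht : 0 ≤ t) (hu : 0 ≤ u) (hv : 0 ≤ v)
    (hm : 0 ≤ m) (hn : 0 ≤ n) (hP0 : 0 ≤ P) (hQ0 : 0 ≤ Q)
    (hsun : s ≤ u + n) (htum : t ≤ u + m)
    (hmPQ : m ≤ P + Q) (hnPQ : n ≤ P + Q)
    (huP : 2*u ≤ P) (hvQ : 2*v ≤ Q)
    (hH : m * n ≤ u * v) (hPQ : P ≤ Q) :
    4*(s*t) ≤ 10*(P*Q) := by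
  have h1 : s*t ≤ (u+n)*(u+m) :=
    mul_le_mul hsun htum ht (by linarith)
  have hm2 : m ≤ 2*Q := by linarith
  have hn2 : n ≤ 2*Q := by linarith
  have huv : u*v ≤ (P/2)*(Q/2) := by nlinarith
  nlinarith [mul_nonneg hu hm, mul_nonneg hu hn, mul_nonneg hP0 hQ0,
    mul_le_mul_of_nonneg_left hm2 hu, mul_le_mul_of_nonneg_left hn2 hu,
    mul_nonneg hP0 hP0]

private lemma cass_core_N (A B C D s t u v m n : ℝ)
    (hA : 0 ≤ A) (hB : 0 ≤ B) (hC : 0 ≤ C) (hD : 0 ≤ D)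
    (hs : 0 ≤ s) (ht : 0 ≤ t) (hu : 0 ≤ u) (hv : 0 ≤ v) (hm : 0 ≤ m) (hn : 0 ≤ n)
    (hsun : s ≤ u + n) (hsmv : s ≤ m + v) (htum : t ≤ u + m) (htvn : t ≤ v + n)
    (hacu : A^2 ≤ C^2 + u) (hcau : C^2 ≤ A^2 + u)
    (hbdv : B^2 ≤ D^2 + v) (hdbv : D^2 ≤ B^2 + v)
    (hbcn : B^2 ≤ C^2 + n) (hcbn : C^2 ≤ B^2 + n)
    (hadm : A^2 ≤ D^2 + m) (hdam : D^2 ≤ A^2 + m)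
    (hmad : m ≤ A^2 + D^2) (hnbc : n ≤ B^2 + C^2)
    (hH : m * n ≤ u * v) :
    (A*B + 2*s) * (C*D + 2*t) ≤ 2916 * ((A*C + 2*u) * (B*D + 2*v)) := by
  have hAC : 0 ≤ A*C := mul_nonneg hA hC
  have hBD : 0 ≤ B*D := mul_nonneg hB hD
  have hP0 : (0:ℝ) ≤ A*C + 2*u := by linarith
  have hQ0 : (0:ℝ) ≤ B*D + 2*v := by linarith
  have hAP : A^2 ≤ A*C + 2*u := cass_half_bound A C u hA hC hu hacu
  have hCP : C^2 ≤ A*C + 2*u := by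
    have := cass_half_bound C A u hC hA hu hcau; nlinarith [this]
  have hBQ : B^2 ≤ B*D + 2*v := cass_half_bound B D v hB hD hv hbdv
  have hDQ : D^2 ≤ B*D + 2*v := by
    have := cass_half_bound D B v hD hB hv hdbv; nlinarith [this]
  have huP : 2*u ≤ A*C + 2*u := by linarith
  have hvQ : 2*v ≤ B*D + 2*v := by linarith
  have T1 : (A*C)*(B*D) ≤ (A*C + 2*u)*(B*D + 2*v) :=
    mul_le_mul (by linarith) (by linarith) hBD hP0
  have T2 : 4*(s*t) ≤ 10*((A*C + 2*u)*(B*D + 2*v)) := by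
    rcases le_total (A*C + 2*u) (B*D + 2*v) with hPQ | hPQ
    · exact cass_st_core s t u v m n _ _ hs ht hu hv hm hn hP0 hQ0 hsun htum
        (by linarith) (by linarith) huP hvQ hH hPQ
    · have := cass_st_core s t v u n m _ _ hs ht hv hu hn hm hQ0 hP0
        (by linarith) (by linarith) (by linarith) (by linarith) hvQ huP
        (by nlinarith [hH]) hPQ
      linarith [this, mul_comm (B*D + 2*v) (A*C + 2*u)]
  have T3 : 2*t*(A*B) ≤ 6*((A*C + 2*u)*(B*D + 2*v)) := by
    rcases le_total (A*C + 2*u) (B*D + 2*v) with hPQ | hPQ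
    · exact cass_mix_core A B t u v m n _ _ hA hB ht hu hv hm hn hP0 hQ0
        hAP hBQ huP hvQ htum htvn (by linarith) (by linarith) hH hPQ
    · have := cass_mix_core B A t v u n m _ _ hB hA ht hv hu hn hm hQ0 hP0
        hBQ hAP hvQ huP htvn htum (by linarith) (by linarith)
        (by nlinarith [hH]) hPQ
      nlinarith [this]
  have T4 : 2*s*(C*D) ≤ 6*((A*C + 2*u)*(B*D + 2*v)) := by
    rcases le_total (A*C + 2*u) (B*D + 2*v) with hPQ | hPQ
    · exact cass_mix_core C D s u v n m _ _ hC hD hs hu hv hn hm hP0 hQ0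
        hCP hDQ huP hvQ hsun (by linarith) (by linarith) (by linarith)
        (by nlinarith [hH]) hPQ
    · have := cass_mix_core D C s v u m n _ _ hD hC hs hv hu hm hn hQ0 hP0
        hDQ hCP hvQ huP (by linarith) hsun (by linarith) (by linarith)
        (by nlinarith [hH]) hPQ
      nlinarith [this]
  nlinarith [T1, T2, T3, T4, mul_nonneg hP0 hQ0]

private lemma cass_tauOne_log {X : Type*} [MetricSpace X] (p x y : X)
    (hx : x ≠ p) (hy : y ≠ p) :
    tauOne p x y = Real.log (Real.sqrt (dist x p) * Real.sqrt (dist y p) + 2 * dist x y)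
      - Real.log (Real.sqrt (dist x p) * Real.sqrt (dist y p)) := by
  have ha : (0:ℝ) < dist x p := dist_pos.2 hx
  have hb : (0:ℝ) < dist y p := dist_pos.2 hy
  have hA : (0:ℝ) < Real.sqrt (dist x p) := Real.sqrt_pos.2 ha
  have hB : (0:ℝ) < Real.sqrt (dist y p) := Real.sqrt_pos.2 hb
  have hAB : (0:ℝ) < Real.sqrt (dist x p) * Real.sqrt (dist y p) := mul_pos hA hB
  have hsm : Real.sqrt (dist x p * dist y p)
      = Real.sqrt (dist x p) * Real.sqrt (dist y p) := Real.sqrt_mul ha.le _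
  have hnum : (0:ℝ) < Real.sqrt (dist x p) * Real.sqrt (dist y p) + 2 * dist x y := by
    have := dist_nonneg (x := x) (y := y); linarith
  rw [tauOne, hsm, ← Real.log_div hnum.ne' hAB.ne']
  congr 1
  field_simp

private lemma cass_log_2916 : Real.log 2916 = 2 * (3 * Real.log 3 + Real.log 2) := by
  have h : (2916:ℝ) = 3^6 * 2^2 := by norm_num
  rw [h, Real.log_mul (by norm_num) (by norm_num), Real.log_pow, Real.log_pow]
  push_cast; ring

private lemma cass_tau_four {X : Type*} [MetricSpace X] (p x y z w : X)
    (hx : x ≠ p) (hy : y ≠ p) (hz : z ≠ p) (hw : w ≠ p)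
    (hcond : dist x w * dist y z ≤ dist x z * dist y w) :
    tauOne p x y + tauOne p z w ≤
      tauOne p x z + tauOne p y w + 2 * (3 * Real.log 3 + Real.log 2) := by
  have ha : (0:ℝ) < dist x p := dist_pos.2 hx
  have hb : (0:ℝ) < dist y p := dist_pos.2 hy
  have hc : (0:ℝ) < dist z p := dist_pos.2 hz
  have hd : (0:ℝ) < dist w p := dist_pos.2 hw
  set A := Real.sqrt (dist x p) with hAdef
  set B := Real.sqrt (dist y p) with hBdef
  set C := Real.sqrt (dist z p) with hCdef
  set D := Real.sqrt (dist w p) with hDdef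
  have hA : (0:ℝ) < A := Real.sqrt_pos.2 ha
  have hB : (0:ℝ) < B := Real.sqrt_pos.2 hb
  have hC : (0:ℝ) < C := Real.sqrt_pos.2 hc
  have hD : (0:ℝ) < D := Real.sqrt_pos.2 hd
  have hA2 : A^2 = dist x p := Real.sq_sqrt ha.le
  have hB2 : B^2 = dist y p := Real.sq_sqrt hb.le
  have hC2 : C^2 = dist z p := Real.sq_sqrt hc.le
  have hD2 : D^2 = dist w p := Real.sq_sqrt hd.le
  have key : (A*B + 2*dist x y) * (C*D + 2*dist z w) ≤
      2916 * ((A*C + 2*dist x z) * (B*D + 2*dist y w)) := by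
    apply cass_core_N A B C D (dist x y) (dist z w) (dist x z) (dist y w) (dist x w) (dist y z)
      hA.le hB.le hC.le hD.le dist_nonneg dist_nonneg dist_nonneg dist_nonneg
      dist_nonneg dist_nonneg
    · calc dist x y ≤ dist x z + dist z y := dist_triangle x z y
        _ = dist x z + dist y z := by rw [dist_comm z y]
    · calc dist x y ≤ dist x w + dist w y := dist_triangle x w y
        _ = dist x w + dist y w := by rw [dist_comm w y]
    · calc dist z w ≤ dist z x + dist x w := dist_triangle z x w
        _ = dist x z + dist x w := by rw [dist_comm z x]
    · calc dist z w ≤ dist z y + dist y w := dist_triangle z y w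
        _ = dist y w + dist y z := by rw [dist_comm z y]; ring
    · rw [hA2, hC2]; exact (dist_triangle x z p).trans (by linarith)
    · rw [hA2, hC2]
      calc dist z p ≤ dist z x + dist x p := dist_triangle z x p
        _ = dist x p + dist x z := by rw [dist_comm z x]; ring
    · rw [hB2, hD2]; exact (dist_triangle y w p).trans (by linarith)
    · rw [hB2, hD2]
      calc dist w p ≤ dist w y + dist y p := dist_triangle w y p
        _ = dist y p + dist y w := by rw [dist_comm w y]; ring
    · rw [hB2, hC2]
      calc dist y p ≤ dist y z + dist z p := dist_triangle y z p
        _ = dist z p + dist y z := by ring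
    · rw [hB2, hC2]
      calc dist z p ≤ dist z y + dist y p := dist_triangle z y p
        _ = dist y p + dist y z := by rw [dist_comm z y]; ring
    · rw [hA2, hD2]; exact (dist_triangle x w p).trans (by linarith)
    · rw [hA2, hD2]
      calc dist w p ≤ dist w x + dist x p := dist_triangle w x p
        _ = dist x p + dist x w := by rw [dist_comm w x]; ring
    · rw [hA2, hD2]
      calc dist x w ≤ dist x p + dist p w := dist_triangle x p w
        _ = dist x p + dist w p := by rw [dist_comm p w]
    · rw [hB2, hC2]
      calc dist y z ≤ dist y p + dist p z := dist_triangle y p z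
        _ = dist y p + dist z p := by rw [dist_comm p z]
    · exact hcond
  have hNxy : (0:ℝ) < A*B + 2*dist x y := by positivity
  have hNzw : (0:ℝ) < C*D + 2*dist z w := by positivity
  have hNxz : (0:ℝ) < A*C + 2*dist x z := by positivity
  have hNyw : (0:ℝ) < B*D + 2*dist y w := by positivity
  have logkey : Real.log (A*B + 2*dist x y) + Real.log (C*D + 2*dist z w) ≤
      Real.log (A*C + 2*dist x z) + Real.log (B*D + 2*dist y w)
        + 2 * (3 * Real.log 3 + Real.log 2) := by
    have h1 : Real.log ((A*B + 2*dist x y) * (C*D + 2*dist z w)) ≤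
        Real.log (2916 * ((A*C + 2*dist x z) * (B*D + 2*dist y w))) :=
      Real.log_le_log (by positivity) key
    rw [Real.log_mul hNxy.ne' hNzw.ne'] at h1
    rw [Real.log_mul (by norm_num) (by positivity),
        Real.log_mul hNxz.ne' hNyw.ne', cass_log_2916] at h1
    linarith
  rw [cass_tauOne_log p x y hx hy, cass_tauOne_log p z w hz hw,
      cass_tauOne_log p x z hx hz, cass_tauOne_log p y w hy hw]
  rw [Real.log_mul hA.ne' hB.ne', Real.log_mul hC.ne' hD.ne',
      Real.log_mul hA.ne' hC.ne', Real.log_mul hB.ne' hD.ne']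
  linarith

private lemma cass_tauOne_comm {X : Type*} [MetricSpace X] (p x y : X) :
    tauOne p x y = tauOne p y x := by
  rw [tauOne, tauOne, dist_comm x y, mul_comm (dist x p) (dist y p)]

private lemma cass_avg_lemma (k : ℕ) (hk : 1 ≤ k) (f g h l : Fin k → ℝ) (c : ℝ)
    (hfg : ∀ i, f i + g i ≤ h i + l i + c) :
    (1/k:ℝ) * ∑ i, f i + (1/k:ℝ) * ∑ i, g i ≤
      (1/k:ℝ) * ∑ i, h i + (1/k:ℝ) * ∑ i, l i + c := by
  have hk0 : (0:ℝ) < k := by exact_mod_cast Nat.lt_of_lt_of_le Nat.zero_lt_one hk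
  have hsum : ∑ i, f i + ∑ i, g i ≤ ∑ i, h i + ∑ i, l i + k * c := by
    have h1 : ∑ i, (f i + g i) ≤ ∑ i, (h i + l i + c) :=
      Finset.sum_le_sum fun i _ => hfg i
    rw [Finset.sum_add_distrib] at h1
    rw [Finset.sum_add_distrib, Finset.sum_add_distrib, Finset.sum_const,
      Finset.card_univ, Fintype.card_fin, nsmul_eq_mul] at h1
    linarith
  calc (1/k:ℝ) * ∑ i, f i + (1/k:ℝ) * ∑ i, g i
      = (1/k:ℝ) * (∑ i, f i + ∑ i, g i) := by ring
    _ ≤ (1/k:ℝ) * (∑ i, h i + ∑ i, l i + k * c) :=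
        mul_le_mul_of_nonneg_left hsum (by positivity)
    _ = (1/k:ℝ) * ∑ i, h i + (1/k:ℝ) * ∑ i, l i + c := by
        field_simp

theorem stmt15 {X : Type*} [MetricSpace X] (k : ℕ) (hk : 1 ≤ k)
    (p : Fin k → X) (x y z w : X)
    (hx : ∀ i, x ≠ p i) (hy : ∀ i, y ≠ p i)
    (hz : ∀ i, z ≠ p i) (hw : ∀ i, w ≠ p i) :
    tauHatAvg p x y + tauHatAvg p z w ≤
      max (tauHatAvg p x z + tauHatAvg p y w)
        (tauHatAvg p x w + tauHatAvg p y z) +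
        2 * (3 * Real.log 3 + Real.log 2) := by
  rcases le_total (dist x w * dist y z) (dist x z * dist y w) with hc | hc
  · have key : ∀ i : Fin k, tauOne (p i) x y + tauOne (p i) z w ≤
        tauOne (p i) x z + tauOne (p i) y w + 2 * (3 * Real.log 3 + Real.log 2) :=
      fun i => cass_tau_four (p i) x y z w (hx i) (hy i) (hz i) (hw i) hc
    have main := cass_avg_lemma k hk (fun i => tauOne (p i) x y)
      (fun i => tauOne (p i) z w) (fun i => tauOne (p i) x z)
      (fun i => tauOne (p i) y w) _ key
    have hfinal : tauHatAvg p x y + tauHatAvg p z w ≤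
        tauHatAvg p x z + tauHatAvg p y w + 2 * (3 * Real.log 3 + Real.log 2) := by
      simpa [tauHatAvg] using main
    exact hfinal.trans (add_le_add_left (le_max_left _ _) _)
  · have key : ∀ i : Fin k, tauOne (p i) x y + tauOne (p i) z w ≤
        tauOne (p i) x w + tauOne (p i) y z + 2 * (3 * Real.log 3 + Real.log 2) := by
      intro i
      have h := cass_tau_four (p i) x y w z (hx i) (hy i) (hw i) (hz i) hc
      rwa [cass_tauOne_comm (p i) w z] at h
    have main := cass_avg_lemma k hk (fun i => tauOne (p i) x y)
      (fun i => tauOne (p i) z w) (fun i => tauOne (p i) x w)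
      (fun i => tauOne (p i) y z) _ key
    have hfinal : tauHatAvg p x y + tauHatAvg p z w ≤
        tauHatAvg p x w + tauHatAvg p y z + 2 * (3 * Real.log 3 + Real.log 2) := by
      simpa [tauHatAvg] using main
    exact hfinal.trans (add_le_add_left (le_max_right _ _) _)
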